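/- Let S = {1,…,m} be a finite set, q a pmf on S with q(i) > 0 for all i, d > 0, X ⊆ ℝⁿ a convex set, and f : X × S → ℝ a cost function such that x ↦ f(x,i) is convex on X for each i ∈ S. Define d̃(x, i, λ_i, ν) ∈ ℝ ∪ {+∞} by: d̃ = ν if λ_i = 0 and f(x,i) ≤ ν; d̃ = (1+d)·λ_i·exp((f(x,i) − λ_i − ν)/λ_i) + ν if λ_i > 0; and d̃ = +∞ if λ_i = 0 and f(x,i) > ν. Then the extended-real-valued function (x, λ, ν) ↦ Σ_{i∈S} q(i)·d̃(x, i, λ_i, ν) is convex on X × (ℝ≥0)^m × ℝ. -/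

import Mathlib

/-- The extended-real-valued dual integrand `d̃` of the paper. -/
noncomputable def dualIntegrand (d b l ν : ℝ) : EReal :=
  if l = 0 then (if b ≤ ν then ((ν : ℝ) : EReal) else ⊤)
  else (((1 + d) * l * Real.exp ((b - l - ν) / l) + ν : ℝ) : EReal)

open Real

lemma coe_mul_ne_bot {c : ℝ} (hc : 0 ≤ c) {B : EReal} (hB : B ≠ ⊥) :
    (c : EReal) * B ≠ ⊥ := by
  rcases eq_or_lt_of_le hc with rfl | hc
  · simp [EReal.zero_mul]
  induction B with
  | bot => exact absurd rfl hB
  | coe r => rw [← EReal.coe_mul]; exact EReal.coe_ne_bot _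
  | top => rw [EReal.coe_mul_top_of_pos hc]; exact (by simp)

lemma coe_mul_add_of_ne_bot {c : ℝ} (hc : 0 ≤ c) {a b : EReal} (ha : a ≠ ⊥) (hb : b ≠ ⊥) :
    (c : EReal) * (a + b) = (c : EReal) * a + (c : EReal) * b := by
  rcases eq_or_lt_of_le hc with rfl | hc
  · simp [EReal.zero_mul]
  induction a with
  | bot => exact absurd rfl ha
  | coe r =>
    induction b with
    | bot => exact absurd rfl hb
    | coe r' => rw [← EReal.coe_add, ← EReal.coe_mul, ← EReal.coe_mul, ← EReal.coe_mul, ← EReal.coe_add, mul_add]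
    | top =>
      rw [EReal.add_top_of_ne_bot (EReal.coe_ne_bot r), EReal.coe_mul_top_of_pos hc,
        ← EReal.coe_mul, EReal.add_top_of_ne_bot (EReal.coe_ne_bot _)]
  | top =>
    rw [EReal.top_add_of_ne_bot hb, EReal.coe_mul_top_of_pos hc,
      EReal.top_add_of_ne_bot (coe_mul_ne_bot hc.le hb)]

lemma sum_ne_bot {ι : Type*} (s : Finset ι) (g : ι → EReal) (hg : ∀ i, g i ≠ ⊥) :
    ∑ i ∈ s, g i ≠ ⊥ := by
  induction s using Finset.cons_induction with
  | empty => simp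
  | cons a s h ih =>
    rw [Finset.sum_cons]
    rw [Ne, EReal.add_eq_bot_iff]
    push_neg
    exact ⟨hg _, ih⟩

lemma coe_mul_sum {ι : Type*} {c : ℝ} (hc : 0 ≤ c) (s : Finset ι) (g : ι → EReal)
    (hg : ∀ i, g i ≠ ⊥) : (c : EReal) * ∑ i ∈ s, g i = ∑ i ∈ s, (c : EReal) * g i := by
  induction s using Finset.cons_induction with
  | empty => simp
  | cons a s h ih =>
    rw [Finset.sum_cons, Finset.sum_cons,
      coe_mul_add_of_ne_bot hc (hg _) (sum_ne_bot _ _ hg), ih]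

lemma dualIntegrand0 (d b l ν : ℝ) : dualIntegrand d b l ν ≠ ⊥ := by
  unfold dualIntegrand
  split_ifs
  · exact EReal.coe_ne_bot _
  · simp
  · exact EReal.coe_ne_bot _

lemma dualIntegrand_mono (d : ℝ) (hd : 0 < d) {b b' : ℝ} (l ν : ℝ) (hl : 0 ≤ l)
    (h : b ≤ b') : dualIntegrand d b l ν ≤ dualIntegrand d b' l ν := by
  unfold dualIntegrand
  rcases eq_or_lt_of_le hl with rfl | hl
  · rw [if_pos rfl, if_pos rfl]
    by_cases hb' : b' ≤ ν
    · rw [if_pos hb', if_pos (h.trans hb')]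
    · rw [if_neg hb']; exact le_top
  · rw [if_neg hl.ne', if_neg hl.ne', EReal.coe_le_coe_iff]
    have hexp : Real.exp ((b - l - ν) / l) ≤ Real.exp ((b' - l - ν) / l) :=
      Real.exp_le_exp.2 ((div_le_div_iff_of_pos_right hl).2 (by linarith))
    have hc : (0:ℝ) ≤ (1 + d) * l := by nlinarith
    have := mul_le_mul_of_nonneg_left hexp hc
    linarith

lemma keyA {c b b' l l' ν ν' t : ℝ} (hc : 0 ≤ c) (hl : 0 < l) (hl' : 0 < l')
    (ht : 0 ≤ t) (ht1 : t ≤ 1) :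
    c * (t * l + (1 - t) * l') *
        Real.exp ((t * b + (1 - t) * b' - (t * l + (1 - t) * l') - (t * ν + (1 - t) * ν')) /
          (t * l + (1 - t) * l'))
      ≤ t * (c * l * Real.exp ((b - l - ν) / l))
        + (1 - t) * (c * l' * Real.exp ((b' - l' - ν') / l')) := by
  set L := t * l + (1 - t) * l' with hL
  have hLpos : 0 < L := by
    rw [hL]
    rcases eq_or_lt_of_le ht with rfl | ht0
    · simpa using hl'
    · nlinarith [mul_pos ht0 hl, mul_nonneg (sub_nonneg.2 ht1) hl'.le]
  set u := (b - l - ν) / l with hu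
  set u' := (b' - l' - ν') / l' with hu'
  have harg : (t * b + (1 - t) * b' - L - (t * ν + (1 - t) * ν')) / L
      = (t * l / L) * u + ((1 - t) * l' / L) * u' := by
    rw [hu, hu', hL]; field_simp; ring
  have hsum : t * l / L + (1 - t) * l' / L = 1 := by
    rw [← add_div, hL, div_self hLpos.ne']
  have hconv := convexOn_exp.2 (Set.mem_univ u) (Set.mem_univ u')
    (by positivity) (by have : 0 ≤ (1 - t) * l' := by nlinarith
                        positivity) hsum
  simp only [smul_eq_mul] at hconv
  rw [harg]
  have h2 := mul_le_mul_of_nonneg_left hconv (by positivity : (0:ℝ) ≤ c * L)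
  calc c * L * Real.exp (t * l / L * u + (1 - t) * l' / L * u')
      ≤ c * L * (t * l / L * Real.exp u + (1 - t) * l' / L * Real.exp u') := h2
    _ = t * (c * l * Real.exp u) + (1 - t) * (c * l' * Real.exp u') := by
        field_simp

lemma keyB {c w w' l ν ν' a a' : ℝ} (hc : 0 ≤ c) (hl : 0 < l) (ha : 0 < a)
    (ha' : 0 ≤ a') (hw' : w' ≤ ν') :
    c * (a * l) * Real.exp ((a * w + a' * w' - a * l - (a * ν + a' * ν')) / (a * l))
      ≤ a * (c * l * Real.exp ((w - l - ν) / l)) := by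
  have hal : 0 < a * l := mul_pos ha hl
  have harg : (a * w + a' * w' - a * l - (a * ν + a' * ν')) / (a * l)
      = (w - l - ν) / l + a' * (w' - ν') / (a * l) := by
    field_simp; ring
  have hle : a' * (w' - ν') / (a * l) ≤ 0 := by
    apply div_nonpos_of_nonpos_of_nonneg _ hal.le
    nlinarith
  have hexp : Real.exp ((a * w + a' * w' - a * l - (a * ν + a' * ν')) / (a * l))
      ≤ Real.exp ((w - l - ν) / l) := by
    rw [harg]; exact Real.exp_le_exp.2 (by linarith)
  have := mul_le_mul_of_nonneg_left hexp (by positivity : (0:ℝ) ≤ c * (a * l))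
  calc c * (a * l) * Real.exp ((a * w + a' * w' - a * l - (a * ν + a' * ν')) / (a * l))
      ≤ c * (a * l) * Real.exp ((w - l - ν) / l) := this
    _ = a * (c * l * Real.exp ((w - l - ν) / l)) := by ring

lemma dualIntegrand_key (d b b' l l' ν ν' t : ℝ) (hd : 0 < d) (hl : 0 ≤ l) (hl' : 0 ≤ l')
    (ht0 : 0 ≤ t) (ht1 : t ≤ 1) :
    dualIntegrand d (t * b + (1 - t) * b') (t * l + (1 - t) * l') (t * ν + (1 - t) * ν')
      ≤ (t : EReal) * dualIntegrand d b l ν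
        + ((1 - t : ℝ) : EReal) * dualIntegrand d b' l' ν' := by
  have hc : (0:ℝ) ≤ 1 + d := by linarith
  rcases eq_or_lt_of_le ht0 with rfl | htpos
  · norm_num [EReal.zero_mul]
  rcases eq_or_lt_of_le ht1 with rfl | ht1'
  · norm_num [EReal.zero_mul]
  have hs : (0:ℝ) < 1 - t := by linarith
  rcases eq_or_lt_of_le hl with rfl | hlpos <;> rcases eq_or_lt_of_le hl' with rfl | hl'pos
  · -- l = 0, l' = 0
    unfold dualIntegrand
    rw [if_pos (show t * 0 + (1 - t) * 0 = 0 by ring), if_pos rfl, if_pos rfl]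
    by_cases hb : b ≤ ν
    · by_cases hb' : b' ≤ ν'
      · rw [if_pos (show t * b + (1 - t) * b' ≤ t * ν + (1 - t) * ν' by nlinarith),
          if_pos hb, if_pos hb', ← EReal.coe_mul, ← EReal.coe_mul, ← EReal.coe_add]
      · rw [if_pos hb, if_neg hb', EReal.coe_mul_top_of_pos hs,
          EReal.add_top_of_ne_bot (coe_mul_ne_bot ht0 (EReal.coe_ne_bot ν))]
        exact le_top
    · rw [if_neg hb, EReal.coe_mul_top_of_pos htpos,
        EReal.top_add_of_ne_bot (coe_mul_ne_bot hs.le (by split_ifs <;> simp))]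
      exact le_top
  · -- l = 0, l' > 0
    rw [show t * b + (1 - t) * b' = (1 - t) * b' + t * b from by ring,
      show t * 0 + (1 - t) * l' = (1 - t) * l' from by ring,
      show t * ν + (1 - t) * ν' = (1 - t) * ν' + t * ν from by ring]
    unfold dualIntegrand
    rw [if_neg (mul_pos hs hl'pos).ne', if_pos rfl, if_neg hl'pos.ne']
    by_cases hb : b ≤ ν
    · rw [if_pos hb, ← EReal.coe_mul, ← EReal.coe_mul, ← EReal.coe_add,
        EReal.coe_le_coe_iff]
      have hk := keyB (c := 1 + d) (w := b') (w' := b) (l := l') (ν := ν') (ν' := ν)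
        hc hl'pos hs ht0 hb
      linarith
    · rw [if_neg hb, EReal.coe_mul_top_of_pos htpos,
        EReal.top_add_of_ne_bot (coe_mul_ne_bot hs.le (EReal.coe_ne_bot _))]
      exact le_top
  · -- l > 0, l' = 0
    rw [show t * l + (1 - t) * 0 = t * l from by ring]
    unfold dualIntegrand
    rw [if_neg (mul_pos htpos hlpos).ne', if_neg hlpos.ne', if_pos rfl]
    by_cases hb' : b' ≤ ν'
    · rw [if_pos hb', ← EReal.coe_mul, ← EReal.coe_mul, ← EReal.coe_add,
        EReal.coe_le_coe_iff]
      have hk := keyB (c := 1 + d) (w := b) (w' := b') (l := l) (ν := ν) (ν' := ν')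
        hc hlpos htpos hs.le hb'
      linarith
    · rw [if_neg hb', EReal.coe_mul_top_of_pos hs,
        EReal.add_top_of_ne_bot (coe_mul_ne_bot ht0 (EReal.coe_ne_bot _))]
      exact le_top
  · -- l > 0, l' > 0
    have hLpos : (0:ℝ) < t * l + (1 - t) * l' := by
      nlinarith [mul_pos htpos hlpos, mul_nonneg hs.le hl'pos.le]
    unfold dualIntegrand
    rw [if_neg hLpos.ne', if_neg hlpos.ne', if_neg hl'pos.ne',
      ← EReal.coe_mul, ← EReal.coe_mul, ← EReal.coe_add, EReal.coe_le_coe_iff]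
    have hk := keyA (c := 1 + d) (b := b) (b' := b') (l := l) (l' := l') (ν := ν) (ν' := ν')
      hc hlpos hl'pos ht0 ht1
    linarith

/-- if `x ↦ f x i` is convex on a convex set `X` for each `i`, then the
extended-real-valued function `(x, λ, ν) ↦ ∑ i, q i * d̃(x, i, λ i, ν)` is convex on
`X × (ℝ≥0)^m × ℝ`, i.e. the convexity inequality holds in the extended reals for
every convex combination of points of the domain. -/
theorem dual_objective_convex
    (n m : ℕ) (q : Fin m → ℝ) (hq0 : ∀ i, 0 < q i) (hq1 : ∑ i, q i = 1)
    (d : ℝ) (hd : 0 < d)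
    (X : Set (Fin n → ℝ)) (hX : Convex ℝ X)
    (f : (Fin n → ℝ) → Fin m → ℝ) (hf : ∀ i, ConvexOn ℝ X (fun x => f x i)) :
    ∀ x ∈ X, ∀ x' ∈ X, ∀ l l' : Fin m → ℝ, (∀ i, 0 ≤ l i) → (∀ i, 0 ≤ l' i) →
      ∀ ν ν' t : ℝ, 0 ≤ t → t ≤ 1 →
        (∑ i, ((q i : EReal) *
            dualIntegrand d (f (t • x + (1 - t) • x') i)
              (t * l i + (1 - t) * l' i) (t * ν + (1 - t) * ν')))
          ≤ ((t : ℝ) : EReal) * (∑ i, ((q i : EReal) * dualIntegrand d (f x i) (l i) ν))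
            + ((1 - t : ℝ) : EReal) *
                (∑ i, ((q i : EReal) * dualIntegrand d (f x' i) (l' i) ν')) := by
  intro x hx x' hx' l l' hl hl' ν ν' t ht0 ht1
  have hs0 : (0:ℝ) ≤ 1 - t := by linarith
  have per : ∀ i : Fin m,
      (q i : EReal) * dualIntegrand d (f (t • x + (1 - t) • x') i)
          (t * l i + (1 - t) * l' i) (t * ν + (1 - t) * ν')
        ≤ (t : EReal) * ((q i : EReal) * dualIntegrand d (f x i) (l i) ν)
          + ((1 - t : ℝ) : EReal) * ((q i : EReal) * dualIntegrand d (f x' i) (l' i) ν') := by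
    intro i
    have hfle : f (t • x + (1 - t) • x') i ≤ t * f x i + (1 - t) * f x' i := by
      have := (hf i).2 hx hx' ht0 hs0 (by ring)
      simpa [smul_eq_mul] using this
    have h1 := dualIntegrand_mono d hd (t * l i + (1 - t) * l' i) (t * ν + (1 - t) * ν')
      (add_nonneg (mul_nonneg ht0 (hl i)) (mul_nonneg hs0 (hl' i))) hfle
    have h2 := dualIntegrand_key d (f x i) (f x' i) (l i) (l' i) ν ν' t hd
      (hl i) (hl' i) ht0 ht1
    have h3 := h1.trans h2
    calc (q i : EReal) * dualIntegrand d (f (t • x + (1 - t) • x') i)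
          (t * l i + (1 - t) * l' i) (t * ν + (1 - t) * ν')
        ≤ (q i : EReal) * ((t : EReal) * dualIntegrand d (f x i) (l i) ν
            + ((1 - t : ℝ) : EReal) * dualIntegrand d (f x' i) (l' i) ν') :=
          mul_le_mul_of_nonneg_left h3 (by exact_mod_cast (hq0 i).le)
      _ = (q i : EReal) * ((t : EReal) * dualIntegrand d (f x i) (l i) ν)
            + (q i : EReal) * (((1 - t : ℝ) : EReal) * dualIntegrand d (f x' i) (l' i) ν') :=
          coe_mul_add_of_ne_bot (hq0 i).le
            (coe_mul_ne_bot ht0 (dualIntegrand0 _ _ _ _))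
            (coe_mul_ne_bot hs0 (dualIntegrand0 _ _ _ _))
      _ = (t : EReal) * ((q i : EReal) * dualIntegrand d (f x i) (l i) ν)
            + ((1 - t : ℝ) : EReal) * ((q i : EReal) * dualIntegrand d (f x' i) (l' i) ν') := by
          rw [mul_left_comm, mul_left_comm ((1 - t : ℝ) : EReal)]
  calc (∑ i, ((q i : EReal) * dualIntegrand d (f (t • x + (1 - t) • x') i)
          (t * l i + (1 - t) * l' i) (t * ν + (1 - t) * ν')))
      ≤ ∑ i, ((t : EReal) * ((q i : EReal) * dualIntegrand d (f x i) (l i) ν)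
          + ((1 - t : ℝ) : EReal) * ((q i : EReal) * dualIntegrand d (f x' i) (l' i) ν')) :=
        Finset.sum_le_sum fun i _ => per i
    _ = (∑ i, (t : EReal) * ((q i : EReal) * dualIntegrand d (f x i) (l i) ν))
          + ∑ i, ((1 - t : ℝ) : EReal) * ((q i : EReal) * dualIntegrand d (f x' i) (l' i) ν') :=
        Finset.sum_add_distrib
    _ = ((t : ℝ) : EReal) * (∑ i, ((q i : EReal) * dualIntegrand d (f x i) (l i) ν))
          + ((1 - t : ℝ) : EReal) *
              (∑ i, ((q i : EReal) * dualIntegrand d (f x' i) (l' i) ν')) := by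
        rw [coe_mul_sum ht0 _ _ (fun i => coe_mul_ne_bot (hq0 i).le (dualIntegrand0 _ _ _ _)),
          coe_mul_sum hs0 _ _ (fun i => coe_mul_ne_bot (hq0 i).le (dualIntegrand0 _ _ _ _))]
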